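/- Let R be a commutative ring and a = a_m X^m + ⋯ + a_0, b = b_n X^n + ⋯ + b_0 in R[X] with m, n ≥ 1. If a and b are comaximal in R[X] and the formal leading coefficients a_m and b_n are comaximal in R, then the resultant of a and b (with respect to formal degrees m, n) is a unit in R. -/

import Mathlib

open Polynomial

/-- The Sylvester matrix of `a` and `b` with respect to formal degrees `m` and `n`:
the first `n` rows carry the coefficients of `a` (from `a.coeff m` down to `a.coeff 0`),
and the last `m` rows carry the coefficients of `b`. -/
def sylvester {R : Type*} [CommRing R] (m n : ℕ) (a b : R[X]) :
    Matrix (Fin (n + m)) (Fin (n + m)) R :=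
  Matrix.of fun i j =>
    if (i : ℕ) < n then
      (if (i : ℕ) ≤ (j : ℕ) ∧ (j : ℕ) ≤ (i : ℕ) + m then a.coeff (m + (i : ℕ) - (j : ℕ)) else 0)
    else
      (if (i : ℕ) - n ≤ (j : ℕ) ∧ (j : ℕ) ≤ (i : ℕ) then b.coeff ((i : ℕ) - (j : ℕ)) else 0)

/-- The resultant of `a` and `b` with respect to formal degrees `m` and `n`. -/
def resultant {R : Type*} [CommRing R] (m n : ℕ) (a b : R[X]) : R :=
  (sylvester m n a b).det

section Aux
variable {R : Type*} [CommRing R]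


lemma aux_coeff (n : ℕ) (x : Fin n → R) (i₀ : Fin n) :
    (∑ i : Fin n, C (x i) * X ^ (n - 1 - (i : ℕ))).coeff (n - 1 - (i₀ : ℕ)) = x i₀ := by
  rw [finset_sum_coeff]
  rw [Finset.sum_eq_single i₀]
  · simp
  · intro i _ hi
    have h1 : (i : ℕ) < n := i.isLt
    have h2 : (i₀ : ℕ) < n := i₀.isLt
    have : n - 1 - (i : ℕ) ≠ n - 1 - (i₀ : ℕ) := by
      intro h; apply hi; exact Fin.ext (by omega)
    simp only [coeff_C_mul, coeff_X_pow, if_neg (Ne.symm this), mul_zero]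
  · simp

lemma aux_degree (n : ℕ) (x : Fin n → R) :
    (∑ i : Fin n, C (x i) * X ^ (n - 1 - (i : ℕ))).degree ≤ ((n - 1 : ℕ) : WithBot ℕ) := by
  refine (degree_sum_le _ _).trans ?_
  refine Finset.sup_le fun i _ => ?_
  refine (degree_C_mul_X_pow_le _ _).trans ?_
  exact_mod_cast (show n - 1 - (i : ℕ) ≤ n - 1 by omega)

lemma vecMul_sylvester (m n : ℕ) (a b : R[X])
    (ha : a.degree ≤ (m : ℕ)) (hb : b.degree ≤ (n : ℕ)) (x : Fin (n + m) → R) (j : Fin (n + m)) :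
    Matrix.vecMul x (sylvester m n a b) j =
      ((∑ i : Fin n, C (x (Fin.castAdd m i)) * X ^ (n - 1 - (i : ℕ))) * a +
       (∑ i : Fin m, C (x (Fin.natAdd n i)) * X ^ (m - 1 - (i : ℕ))) * b).coeff
        (m + n - 1 - (j : ℕ)) := by
  have hj : (j : ℕ) < n + m := j.isLt
  rw [coeff_add, Finset.sum_mul, Finset.sum_mul, finset_sum_coeff, finset_sum_coeff]
  simp only [Matrix.vecMul, dotProduct]
  rw [Fin.sum_univ_add]
  congr 1
  · refine Finset.sum_congr rfl fun i _ => ?_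
    have hi : (i : ℕ) < n := i.isLt
    rw [mul_right_comm, coeff_mul_X_pow', coeff_C_mul]
    simp only [_root_.sylvester, Matrix.of_apply, Fin.coe_castAdd]
    rw [if_pos hi]
    split_ifs with h1 h2 h2
    · rw [show m + n - 1 - (j : ℕ) - (n - 1 - (i : ℕ)) = m + (i : ℕ) - (j : ℕ) from by omega]
    · exact absurd (show n - 1 - (i : ℕ) ≤ m + n - 1 - (j : ℕ) by omega) h2
    · have hji : (j : ℕ) < (i : ℕ) := by omega
      rw [show m + n - 1 - (j : ℕ) - (n - 1 - (i : ℕ)) = m + (i : ℕ) - (j : ℕ) from by omega,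
        coeff_eq_zero_of_degree_lt, mul_zero]
      refine lt_of_le_of_lt ha ?_
      exact_mod_cast (show m < m + (i : ℕ) - (j : ℕ) by omega)
    · ring
  · refine Finset.sum_congr rfl fun i _ => ?_
    have hi : (i : ℕ) < m := i.isLt
    rw [mul_right_comm, coeff_mul_X_pow', coeff_C_mul]
    simp only [_root_.sylvester, Matrix.of_apply, Fin.coe_natAdd]
    rw [if_neg (by omega)]
    split_ifs with h1 h2 h2
    · rw [show m + n - 1 - (j : ℕ) - (m - 1 - (i : ℕ)) = (n + (i : ℕ)) - (j : ℕ) from by omega]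
    · exact absurd (show m - 1 - (i : ℕ) ≤ m + n - 1 - (j : ℕ) by omega) h2
    · have hji : (j : ℕ) < (i : ℕ) := by omega
      rw [show m + n - 1 - (j : ℕ) - (m - 1 - (i : ℕ)) = (n + (i : ℕ)) - (j : ℕ) from by omega,
        coeff_eq_zero_of_degree_lt, mul_zero]
      refine lt_of_le_of_lt hb ?_
      exact_mod_cast (show n < n + (i : ℕ) - (j : ℕ) by omega)
    · ring

lemma sylvester_det_ne_zero {K : Type*} [Field K] (m n : ℕ)
    (hm : 1 ≤ m) (hn : 1 ≤ n) (a b : K[X])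
    (ha : a.degree ≤ (m : ℕ)) (hb : b.degree ≤ (n : ℕ))
    (hab : IsCoprime a b) (hlead : IsCoprime (a.coeff m) (b.coeff n)) :
    (sylvester m n a b).det ≠ 0 := by
  intro hdet
  obtain ⟨x, hx0, hx⟩ := Matrix.exists_vecMul_eq_zero_iff.mpr hdet
  set u : K[X] := ∑ i : Fin n, C (x (Fin.castAdd m i)) * X ^ (n - 1 - (i : ℕ)) with hu
  set v : K[X] := ∑ i : Fin m, C (x (Fin.natAdd n i)) * X ^ (m - 1 - (i : ℕ)) with hv
  have hdu : u.degree ≤ ((n - 1 : ℕ) : WithBot ℕ) := aux_degree n _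
  have hdv : v.degree ≤ ((m - 1 : ℕ) : WithBot ℕ) := aux_degree m _
  have hw : u * a + v * b = 0 := by
    apply Polynomial.ext
    intro d
    rw [coeff_zero]
    by_cases hd : d < m + n
    · have hj := vecMul_sylvester m n a b ha hb x ⟨m + n - 1 - d, by omega⟩
      have h0 : Matrix.vecMul x (sylvester m n a b) ⟨m + n - 1 - d, by omega⟩ = 0 := by
        rw [hx]; rfl
      rw [h0, show m + n - 1 - ((⟨m + n - 1 - d, by omega⟩ : Fin (n + m)) : ℕ) = d from by
        simp only []; omega] at hj
      rw [← hu, ← hv] at hj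
      exact hj.symm
    · apply coeff_eq_zero_of_degree_lt
      refine lt_of_le_of_lt (degree_add_le _ _) ?_
      rw [max_lt_iff]
      constructor
      · refine lt_of_le_of_lt (degree_mul_le _ _) ?_
        refine lt_of_le_of_lt (add_le_add hdu ha) ?_
        exact_mod_cast (show ((n - 1 + m : ℕ) : WithBot ℕ) < (d : ℕ) by
          exact_mod_cast (show n - 1 + m < d by omega))
      · refine lt_of_le_of_lt (degree_mul_le _ _) ?_
        refine lt_of_le_of_lt (add_le_add hdv hb) ?_
        exact_mod_cast (show m - 1 + n < d by omega)
  -- from leading coprimality, a.coeff m ≠ 0 or b.coeff n ≠ 0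
  have hcase : a.coeff m ≠ 0 ∨ b.coeff n ≠ 0 := by
    by_contra h
    push_neg at h
    rw [h.1, h.2] at hlead
    exact one_ne_zero ((isCoprime_zero_left.mp hlead).inv_mul_cancel.symm.trans (mul_zero _))
  have hxz : ∀ (hu0 : u = 0) (hv0 : v = 0), False := by
    intro hu0 hv0
    apply hx0
    funext k
    refine Fin.addCases (fun i => ?_) (fun i => ?_) k
    · have := aux_coeff n (fun i : Fin n => x (Fin.castAdd m i)) i
      rw [← hu, hu0] at this
      simpa using this.symm
    · have := aux_coeff m (fun i : Fin m => x (Fin.natAdd n i)) i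
      rw [← hv, hv0] at this
      simpa using this.symm
  rcases hcase with hc | hc
  · have hdega : a.degree = (m : ℕ) := degree_eq_of_le_of_coeff_ne_zero ha hc
    have ha0 : a ≠ 0 := fun h => by simp [h] at hc
    have hdvd : a ∣ v := by
      refine hab.dvd_of_dvd_mul_right ⟨-u, ?_⟩
      linear_combination hw
    have hv0 : v = 0 := by
      by_contra hv0
      have := Polynomial.degree_le_of_dvd hdvd hv0
      rw [hdega] at this
      have := this.trans hdv
      exact absurd this (by
        simp only [not_le]
        exact_mod_cast (show (m - 1 : ℕ) < m by omega))
    have hu0 : u = 0 := by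
      have : u * a = 0 := by rw [hv0] at hw; simpa using hw
      rcases mul_eq_zero.mp this with h | h
      · exact h
      · exact absurd h ha0
    exact hxz hu0 hv0
  · have hdegb : b.degree = (n : ℕ) := degree_eq_of_le_of_coeff_ne_zero hb hc
    have hb0 : b ≠ 0 := fun h => by simp [h] at hc
    have hdvd : b ∣ u := by
      refine hab.symm.dvd_of_dvd_mul_right ⟨-v, ?_⟩
      linear_combination hw
    have hu0 : u = 0 := by
      by_contra hu0
      have := Polynomial.degree_le_of_dvd hdvd hu0
      rw [hdegb] at this
      have := this.trans hdu
      exact absurd this (by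
        simp only [not_le]
        exact_mod_cast (show (n - 1 : ℕ) < n by omega))
    have hv0 : v = 0 := by
      have : v * b = 0 := by rw [hu0] at hw; simpa using hw
      rcases mul_eq_zero.mp this with h | h
      · exact h
      · exact absurd h hb0
    exact hxz hu0 hv0

lemma sylvester_map {R S : Type*} [CommRing R] [CommRing S] (φ : R →+* S) (m n : ℕ)
    (a b : R[X]) :
    (sylvester m n a b).map φ = sylvester m n (a.map φ) (b.map φ) := by
  ext i j
  simp only [Matrix.map_apply, _root_.sylvester, Matrix.of_apply, coeff_map]
  split_ifs <;> simp [coeff_map]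
end Aux

theorem resultant_isUnit_of_comaximal {R : Type*} [CommRing R] (m n : ℕ)
    (hm : 1 ≤ m) (hn : 1 ≤ n) (a b : R[X])
    (ha : a.degree ≤ (m : ℕ)) (hb : b.degree ≤ (n : ℕ))
    (hab : IsCoprime a b) (hlead : IsCoprime (a.coeff m) (b.coeff n)) :
    IsUnit (resultant m n a b) := by
  by_contra h
  obtain ⟨M, hM, hmem⟩ := exists_max_ideal_of_mem_nonunits h
  haveI := hM
  letI : Field (R ⧸ M) := Ideal.Quotient.field M
  set φ := Ideal.Quotient.mk M
  have h0 : φ (resultant m n a b) = 0 := (Ideal.Quotient.eq_zero_iff_mem).mpr hmem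
  rw [_root_.resultant, RingHom.map_det, RingHom.mapMatrix_apply, sylvester_map] at h0
  refine sylvester_det_ne_zero m n hm hn (a.map φ) (b.map φ)
    (degree_map_le.trans ha) (degree_map_le.trans hb)
    (hab.map (mapRingHom φ)) ?_ h0
  simpa only [coeff_map] using hlead.map φ
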